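/- Let δ ∈ ℝ, let (λ_k)_{k≥0} be a strictly increasing sequence of positive real numbers, and let f ∈ 𝒟(δ, λ, λ₀) (i.e., the remainder parameter λ_# equals λ₀) with associated Dirichlet series L_n(s) = Σ_{k≥0} a^n_k λ_k^{−s}. Assume a⁰₀ ≠ 0. Then there exists δ' > δ such that f has no zeroes in the half-plane {s ∈ ℂ : Re s > δ'}. -/

import Mathlib

/-- Membership in the class `𝒟(δ, λ)`: the Dirichlet series with coefficients `a`
and frequencies `λ` converges absolutely at every real `σ > δ`. -/
def DirichletClass (δ : ℝ) (lam : ℕ → ℝ) (a : ℕ → ℂ) : Prop :=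
  ∀ σ : ℝ, δ < σ → Summable fun k => ‖a k‖ * lam k ^ (-σ)

/-- The Dirichlet series `L(s) = Σ_k a_k λ_k^{-s}`. -/
noncomputable def DirichletSeries (lam : ℕ → ℝ) (a : ℕ → ℂ) (s : ℂ) : ℂ :=
  ∑' k, a k * (lam k : ℂ) ^ (-s)

/-- If `f ∈ 𝒟(δ, λ, λ₀)` (remainder parameter `λ_# = λ₀`) and the
leading coefficient `a⁰₀` of `L₀` is nonzero, then there is `δ' > δ` such that `f`
has no zeroes in the half-plane `{Re s > δ'}`. -/
theorem stmt1 (δ : ℝ) (lam : ℕ → ℝ) (hmono : StrictMono lam) (hpos : ∀ k, 0 < lam k)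
    (a : ℕ → ℕ → ℂ) (hD : ∀ n, DirichletClass δ lam (a n))
    (f : ℂ → ℂ) (hf : DifferentiableOn ℂ f {s : ℂ | δ < s.re})
    (hrem : ∀ N : ℕ, ∃ C : ℝ, 0 < C ∧ ∀ s : ℂ, δ < s.re →
      ‖f s - ∑ n ∈ Finset.range (N + 1), s ^ (-(n : ℤ)) * DirichletSeries lam (a n) s‖
        ≤ C * ‖s‖ ^ (-(N + 1 : ℤ)) * lam 0 ^ (-s.re))
    (ha : a 0 0 ≠ 0) :
    ∃ δ' : ℝ, δ < δ' ∧ ∀ s : ℂ, δ' < s.re → f s ≠ 0 := by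
  have hA : 0 < ‖a 0 0‖ := norm_pos_iff.2 ha
  set ε : ℝ := ‖a 0 0‖ / 4 with hεdef
  have hεpos : 0 < ε := by positivity
  obtain ⟨C, hC, hrem0⟩ := hrem 0
  set σ0 : ℝ := δ + 1 with hσ0def
  have hσ0 : δ < σ0 := by simp [hσ0def]
  have hsum0 : Summable (fun k => ‖a 0 k‖ * lam k ^ (-σ0)) := hD 0 σ0 hσ0
  have hsumM : Summable (fun k => ‖a 0 (k + 1)‖ * lam (k + 1) ^ (-σ0)) :=
    hsum0.comp_injective fun x y h => by omega
  set M : ℝ := ∑' k, ‖a 0 (k + 1)‖ * lam (k + 1) ^ (-σ0) with hMdef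
  have hM0 : 0 ≤ M := tsum_nonneg fun k => mul_nonneg (norm_nonneg _) (Real.rpow_nonneg (hpos _).le _)
  have h01 : lam 0 < lam 1 := hmono Nat.zero_lt_one
  have hr1 : lam 0 / lam 1 < 1 := (div_lt_one (hpos 1)).2 h01
  have hr0 : (0:ℝ) < lam 0 / lam 1 := div_pos (hpos 0) (hpos 1)
  have htend : Filter.Tendsto (fun σ : ℝ => M * lam 1 ^ σ0 * (lam 0 / lam 1) ^ σ)
      Filter.atTop (nhds 0) := by
    have h := tendsto_rpow_atTop_of_base_lt_one (lam 0 / lam 1)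
      (by linarith) hr1
    simpa using (h.const_mul (M * lam 1 ^ σ0))
  have hev : ∀ᶠ σ : ℝ in Filter.atTop, M * lam 1 ^ σ0 * (lam 0 / lam 1) ^ σ < ε :=
    htend.eventually (gt_mem_nhds hεpos)
  obtain ⟨σ1, hσ1⟩ := Filter.eventually_atTop.1 hev
  refine ⟨max (max σ0 σ1) (max (C / ε) 1), lt_of_lt_of_le hσ0 (le_max_of_le_left (le_max_left _ _)), ?_⟩
  intro s hs
  set σ : ℝ := s.re with hσdef
  have hσσ0 : σ0 ≤ σ := le_of_lt (lt_of_le_of_lt (le_max_of_le_left (le_max_left _ _)) hs)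
  have hσδ : δ < σ := lt_of_lt_of_le hσ0 hσσ0
  have hσ1le : σ1 ≤ σ := le_of_lt (lt_of_le_of_lt (le_max_of_le_left (le_max_right _ _)) hs)
  have hσCε : C / ε < σ := lt_of_le_of_lt (le_max_of_le_right (le_max_left _ _)) hs
  have hσ1' : (1:ℝ) < σ := lt_of_le_of_lt (le_max_of_le_right (le_max_right _ _)) hs
  have hσpos : (0:ℝ) < σ := by linarith
  -- norm facts
  have hnorm : ∀ k, ‖a 0 k * (lam k : ℂ) ^ (-s)‖ = ‖a 0 k‖ * lam k ^ (-σ) := by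
    intro k
    rw [norm_mul,
      Complex.norm_cpow_eq_rpow_re_of_pos (hpos k)]
    simp [hσdef]
  -- summability of L0 terms at s
  have hsumσ : Summable (fun k => ‖a 0 k‖ * lam k ^ (-σ)) := hD 0 σ hσδ
  have hc : Summable (fun k => a 0 k * (lam k : ℂ) ^ (-s)) := by
    apply Summable.of_norm
    simpa only [hnorm] using hsumσ
  -- split off the first term
  have hsplit : DirichletSeries lam (a 0) s
      = a 0 0 * (lam 0 : ℂ) ^ (-s) + ∑' k, a 0 (k + 1) * (lam (k + 1) : ℂ) ^ (-s) := by
    unfold DirichletSeries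
    exact Summable.tsum_eq_zero_add hc
  set T : ℂ := ∑' k, a 0 (k + 1) * (lam (k + 1) : ℂ) ^ (-s) with hTdef
  -- bound on tail
  have hterm : ∀ k, ‖a 0 (k + 1)‖ * lam (k + 1) ^ (-σ)
      ≤ lam 1 ^ (σ0 - σ) * (‖a 0 (k + 1)‖ * lam (k + 1) ^ (-σ0)) := by
    intro k
    have h1k : lam 1 ≤ lam (k + 1) := hmono.le_iff_le.2 (by omega)
    have hsplitexp : lam (k + 1) ^ (-σ) = lam (k + 1) ^ (σ0 - σ) * lam (k + 1) ^ (-σ0) := by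
      rw [← Real.rpow_add (hpos (k + 1))]; ring_nf
    have hb : lam (k + 1) ^ (σ0 - σ) ≤ lam 1 ^ (σ0 - σ) :=
      Real.rpow_le_rpow_of_nonpos (hpos 1) h1k (by linarith)
    rw [hsplitexp]
    have hnn : 0 ≤ ‖a 0 (k + 1)‖ * lam (k + 1) ^ (-σ0) := mul_nonneg (norm_nonneg _) (Real.rpow_nonneg (hpos _).le _)
    calc ‖a 0 (k + 1)‖ * (lam (k + 1) ^ (σ0 - σ) * lam (k + 1) ^ (-σ0))
        = lam (k + 1) ^ (σ0 - σ) * (‖a 0 (k + 1)‖ * lam (k + 1) ^ (-σ0)) := by ring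
      _ ≤ lam 1 ^ (σ0 - σ) * (‖a 0 (k + 1)‖ * lam (k + 1) ^ (-σ0)) :=
        mul_le_mul_of_nonneg_right hb hnn
  have hsumσtail : Summable (fun k => ‖a 0 (k + 1)‖ * lam (k + 1) ^ (-σ)) :=
    hsumσ.comp_injective fun x y h => by omega
  have hTnorm : ‖T‖ ≤ lam 1 ^ (σ0 - σ) * M := by
    calc ‖T‖ ≤ ∑' k, ‖a 0 (k + 1) * (lam (k + 1) : ℂ) ^ (-s)‖ :=
          norm_tsum_le_tsum_norm (by simpa only [hnorm] using hsumσtail)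
      _ = ∑' k, ‖a 0 (k + 1)‖ * lam (k + 1) ^ (-σ) := by simp only [hnorm]
      _ ≤ ∑' k, lam 1 ^ (σ0 - σ) * (‖a 0 (k + 1)‖ * lam (k + 1) ^ (-σ0)) :=
          Summable.tsum_le_tsum hterm hsumσtail (hsumM.mul_left _)
      _ = lam 1 ^ (σ0 - σ) * M := by rw [tsum_mul_left]
  -- relate to ε * lam 0 ^ (-σ)
  have hl0pos : (0:ℝ) < lam 0 ^ (-σ) := Real.rpow_pos_of_pos (hpos 0) _
  have hTbound : ‖T‖ ≤ ε * lam 0 ^ (-σ) := by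
    have hkey : lam 1 ^ (σ0 - σ) * M = (M * lam 1 ^ σ0 * (lam 0 / lam 1) ^ σ) * lam 0 ^ (-σ) := by
      rw [Real.div_rpow (le_of_lt (hpos 0)) (le_of_lt (hpos 1)),
        Real.rpow_sub (hpos 1), Real.rpow_neg (le_of_lt (hpos 0))]
      field_simp
      rw [mul_div_mul_comm, div_self (Real.rpow_pos_of_pos (hpos 0) σ).ne',
        mul_one]
    rw [hkey] at hTnorm
    refine hTnorm.trans ?_
    exact mul_le_mul_of_nonneg_right (le_of_lt (hσ1 σ hσ1le)) (le_of_lt hl0pos)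
  -- remainder bound
  have habs : σ ≤ ‖s‖ := Complex.re_le_norm s
  have hspos : (0:ℝ) < ‖s‖ := lt_of_lt_of_le hσpos habs
  have hrems := hrem0 s hσδ
  have hsumone : ∑ n ∈ Finset.range (0 + 1), s ^ (-(n : ℤ)) * DirichletSeries lam (a n) s
      = DirichletSeries lam (a 0) s := by simp
  rw [hsumone] at hrems
  have hRbound : ‖f s - DirichletSeries lam (a 0) s‖ ≤ ε * lam 0 ^ (-σ) := by
    refine hrems.trans ?_
    have h1 : C * ‖s‖ ^ (-(0 + 1 : ℤ)) ≤ ε := by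
      have : ‖s‖ ^ (-(0 + 1 : ℤ)) = ‖s‖⁻¹ := by norm_num
      rw [this]
      have hCε : C < ε * ‖s‖ := by
        have : C / ε < ‖s‖ := lt_of_lt_of_le hσCε habs
        calc C = (C / ε) * ε := by field_simp
          _ < ‖s‖ * ε := by exact mul_lt_mul_of_pos_right this hεpos
          _ = ε * ‖s‖ := by ring
      rw [mul_inv_le_iff₀ hspos]
      exact le_of_lt hCε
    calc C * ‖s‖ ^ (-(0 + 1 : ℤ)) * lam 0 ^ (-s.re)
        ≤ ε * lam 0 ^ (-s.re) := mul_le_mul_of_nonneg_right h1 (le_of_lt hl0pos)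
      _ = ε * lam 0 ^ (-σ) := rfl
  -- main term
  have hmain : ‖a 0 0 * (lam 0 : ℂ) ^ (-s)‖ = ‖a 0 0‖ * lam 0 ^ (-σ) := hnorm 0
  -- conclude
  intro hfz
  have hdecomp : a 0 0 * (lam 0 : ℂ) ^ (-s)
      = (f s - DirichletSeries lam (a 0) s) * (-1) + f s - T := by
    rw [hsplit]; ring
  have : ‖a 0 0‖ * lam 0 ^ (-σ) ≤ ε * lam 0 ^ (-σ) + ε * lam 0 ^ (-σ) := by
    rw [← hmain, hdecomp]
    calc ‖(f s - DirichletSeries lam (a 0) s) * (-1) + f s - T‖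
        ≤ ‖(f s - DirichletSeries lam (a 0) s) * (-1) + f s‖ + ‖T‖ := norm_sub_le _ _
      _ ≤ ‖(f s - DirichletSeries lam (a 0) s) * (-1)‖ + ‖f s‖ + ‖T‖ :=
          add_le_add_left (norm_add_le _ _) _
      _ = ‖f s - DirichletSeries lam (a 0) s‖ + ‖T‖ := by rw [hfz]; simp
      _ ≤ ε * lam 0 ^ (-σ) + ε * lam 0 ^ (-σ) := add_le_add hRbound hTbound
  have hlt : ‖a 0 0‖ * lam 0 ^ (-σ) > ε * lam 0 ^ (-σ) + ε * lam 0 ^ (-σ) := by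
    have : ε + ε < ‖a 0 0‖ := by rw [hεdef]; linarith
    calc ε * lam 0 ^ (-σ) + ε * lam 0 ^ (-σ) = (ε + ε) * lam 0 ^ (-σ) := by ring
      _ < ‖a 0 0‖ * lam 0 ^ (-σ) := mul_lt_mul_of_pos_right this hl0pos
  linarith
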